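/- Let $0<\rho<r$, $z_1,\dots,z_k$ with $\max_i|z_i|\le\rho$, and $f$ analytic on a disk containing $\{|z|\le r\}$ with $\|f\|_r\le 1$. Then $\left\|\sum_{|I|\ge 2}\prod_{i\in I}\frac{f(\cdot)-f(z_i)}{\cdot-z_i}\right\|_r\le\left(1+\frac{2}{\rho}\right)^k\|f\|_r^2$, where the sum ranges over subsets $I\subseteq\{1,\dots,k\}$ with $|I|\ge2$. -/

import Mathlib

/-- Quadratic bound on the higher-order terms: with `‖f‖ᵣ ≤ 1`,
`‖∑_{|I| ≥ 2} ∏_{i ∈ I} (f z - f zᵢ)/(z - zᵢ)‖ᵣ ≤ (1 + 2/ρ)^k ‖f‖ᵣ²`.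
Here `g` is the analytic extension of the sum. -/
theorem quadratic_bound (R ρ r : ℝ) (k : ℕ) (hk : 1 ≤ k) (hρ : 0 < ρ)
    (h1 : 2 * ρ < r) (hrR : r < R)
    (z : Fin k → ℂ) (hz : ∀ i, ‖z i‖ ≤ ρ)
    (f : ℂ → ℂ) (hf : DifferentiableOn ℂ f (Metric.ball (0 : ℂ) R))
    (g : ℂ → ℂ) (hg : DifferentiableOn ℂ g (Metric.ball (0 : ℂ) R))
    (hgf : ∀ w ∈ Metric.ball (0 : ℂ) R, (∀ j, w ≠ z j) →
      g w = ∑ I ∈ Finset.univ.powerset.filter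
          (fun I : Finset (Fin k) => 2 ≤ I.card),
        ∏ i ∈ I, (f w - f (z i)) / (w - z i))
    (M : ℝ) (hM : ∀ w : ℂ, ‖w‖ ≤ r → ‖f w‖ ≤ M)
    (hM1 : M ≤ 1) :
    ∀ w : ℂ, ‖w‖ ≤ r →
      ‖g w‖ ≤ (1 + 2 / ρ) ^ k * M ^ 2 := by
  have hρr : ρ < r := lt_of_le_of_lt (by linarith) h1
  have hr0 : 0 < r := lt_trans hρ hρr
  have hM0 : 0 ≤ M := le_trans (norm_nonneg (f 0)) (hM 0 (by simpa using hr0.le))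
  -- bound on the circle |w| = r
  have key : ∀ w : ℂ, ‖w‖ = r → ‖g w‖ ≤ (1 + 2 / ρ) ^ k * M ^ 2 := by
    intro w hw
    have hwR : w ∈ Metric.ball (0 : ℂ) R := by
      simp [Complex.dist_eq, hw, hrR]
    have hwz : ∀ j, w ≠ z j := by
      intro j hj
      have := hz j
      rw [← hj, hw] at this
      linarith
    rw [hgf w hwR hwz]
    calc ‖∑ I ∈ Finset.univ.powerset.filter
          (fun I : Finset (Fin k) => 2 ≤ I.card),
          ∏ i ∈ I, (f w - f (z i)) / (w - z i)‖
        ≤ ∑ I ∈ Finset.univ.powerset.filter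
          (fun I : Finset (Fin k) => 2 ≤ I.card),
          ‖∏ i ∈ I, (f w - f (z i)) / (w - z i)‖ := by
          exact norm_sum_le _ _
      _ ≤ ∑ I ∈ Finset.univ.powerset.filter
          (fun I : Finset (Fin k) => 2 ≤ I.card),
          M ^ 2 * (2 / ρ) ^ I.card := by
          apply Finset.sum_le_sum
          intro I hI
          rw [Finset.mem_filter] at hI
          rw [norm_prod]
          have hfac : ∀ i ∈ I, ‖(f w - f (z i)) / (w - z i)‖ ≤ 2 * M / ρ := by
            intro i _
            rw [norm_div]
            have hnum : ‖f w - f (z i)‖ ≤ 2 * M := by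
              calc ‖f w - f (z i)‖
                  ≤ ‖f w‖ + ‖f (z i)‖ := by
                    exact norm_sub_le (f w) (f (z i))
                _ ≤ M + M := add_le_add (hM w hw.le) (hM (z i) ((hz i).trans hρr.le))
                _ = 2 * M := by ring
            have hden : ρ ≤ ‖w - z i‖ := by
              have h3 := hz i
              calc ρ ≤ r - ρ := by linarith
                _ ≤ ‖w‖ - ‖z i‖ := by rw [hw]; linarith
                _ ≤ ‖w - z i‖ := by
                    exact norm_sub_norm_le w (z i)
            exact div_le_div₀ (by positivity) hnum hρ hden
          calc ∏ i ∈ I, ‖(f w - f (z i)) / (w - z i)‖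
              ≤ ∏ _i ∈ I, (2 * M / ρ) := by
                apply Finset.prod_le_prod (fun i _ => norm_nonneg _) hfac
            _ = (2 * M / ρ) ^ I.card := by rw [Finset.prod_const]
            _ = M ^ I.card * (2 / ρ) ^ I.card := by
                rw [← mul_pow]; congr 1; field_simp
            _ ≤ M ^ 2 * (2 / ρ) ^ I.card := by
                apply mul_le_mul_of_nonneg_right _ (by positivity)
                exact pow_le_pow_of_le_one hM0 hM1 hI.2
      _ ≤ ∑ I ∈ (Finset.univ : Finset (Fin k)).powerset,
          M ^ 2 * (2 / ρ) ^ I.card := by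
          apply Finset.sum_le_sum_of_subset_of_nonneg (Finset.filter_subset _ _)
          intro I _ _
          positivity
      _ = (1 + 2 / ρ) ^ k * M ^ 2 := by
          have := Finset.prod_add (fun _ : Fin k => (2/ρ : ℝ)) (fun _ => (1:ℝ)) Finset.univ
          simp only [Finset.prod_const, Finset.prod_const_one, mul_one,
            Finset.card_univ, Fintype.card_fin] at this
          simp only [one_pow, mul_one] at this
          rw [← Finset.mul_sum, ← this]
          ring
  -- maximum modulus principle
  intro w hw
  have hsub : Metric.closedBall (0:ℂ) r ⊆ Metric.ball (0:ℂ) R :=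
    Metric.closedBall_subset_ball hrR
  have hd : DiffContOnCl ℂ g (Metric.ball (0:ℂ) r) := by
    apply DifferentiableOn.diffContOnCl
    rw [closure_ball (0:ℂ) hr0.ne']
    exact hg.mono hsub
  have := Complex.norm_le_of_forall_mem_frontier_norm_le
    (Metric.isBounded_ball (x := (0:ℂ)) (r := r)) hd
    (C := (1 + 2 / ρ) ^ k * M ^ 2) ?_ (z := w) ?_
  · exact this
  · intro x hx
    rw [frontier_ball (0:ℂ) hr0.ne'] at hx
    rw [Metric.mem_sphere, Complex.dist_eq, sub_zero] at hx
    exact key x hx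
  · rw [closure_ball (0:ℂ) hr0.ne']
    simpa [Complex.dist_eq] using hw
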